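/- Let G be a hypergraph on N vertices with hyperedges of size at most d, minimum vertex degree t₁ and maximum vertex degree t₂, so that the total degree sum Σ_{y∈E} |y| ≤ N·t₂. If S is a uniformly random k-subset of vertices and N ≥ 4kd/ε, then Σ_{y∈E} E[L_S(y)] ≤ (ε/8)·k·t₂, where L_S(y) = max(0, |S∩y|−1). -/

import Mathlib

open Finset

lemma fiber_count {V : Type*} [Fintype V] [DecidableEq V] {k : ℕ} (hk2 : 2 ≤ k)
    {a b : V} (hab : a ≠ b) :
    (((Finset.univ : Finset V).powersetCard k).filter (fun S => a ∈ S ∧ b ∈ S)).card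
      = (Fintype.card V - 2).choose (k - 2) := by
  have hb : b ∈ (Finset.univ : Finset V).erase a := by simp [Ne.symm hab]
  have hcard : ((((Finset.univ : Finset V)).erase a).erase b).card = Fintype.card V - 2 := by
    rw [card_erase_of_mem hb, card_erase_of_mem (mem_univ a), Finset.card_univ]
    omega
  have := Finset.card_nbij' (s := ((Finset.univ : Finset V).powersetCard k).filter
      (fun S => a ∈ S ∧ b ∈ S))
      (t := ((((Finset.univ : Finset V)).erase a).erase b).powersetCard (k - 2))
      (fun S => (S.erase a).erase b) (fun T => insert a (insert b T))
      ?_ ?_ ?_ ?_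
  · rw [this, card_powersetCard, hcard]
  · intro S hS
    simp only [mem_coe, mem_filter, mem_powersetCard] at hS
    obtain ⟨⟨-, hSk⟩, haS, hbS⟩ := hS
    rw [mem_coe, mem_powersetCard]
    constructor
    · intro x hx
      simp only [mem_erase] at hx ⊢
      exact ⟨hx.1, hx.2.1, mem_univ x⟩
    · rw [card_erase_of_mem (by simp [mem_erase, hab.symm, hbS]),
        card_erase_of_mem haS, hSk]
      omega
  · intro T hT
    rw [mem_coe, mem_powersetCard] at hT
    obtain ⟨hTsub, hTcard⟩ := hT
    have haT : a ∉ T := fun h => by simpa using (mem_erase.mp (hTsub h)).2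
    have hbT : b ∉ T := fun h => (mem_erase.mp (hTsub h)).1 rfl
    have habT : a ∉ insert b T := by simp [hab, haT]
    simp only [mem_coe, mem_filter, mem_powersetCard]
    refine ⟨⟨subset_univ _, ?_⟩, mem_insert_self _ _,
      mem_insert_of_mem (mem_insert_self _ _)⟩
    rw [card_insert_of_notMem habT, card_insert_of_notMem hbT, hTcard]
    omega
  · intro S hS
    simp only [mem_coe, mem_filter, mem_powersetCard] at hS
    obtain ⟨-, haS, hbS⟩ := hS
    show insert a (insert b ((S.erase a).erase b)) = S
    rw [insert_erase (by simp [mem_erase, hab.symm, hbS]), insert_erase haS]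
  · intro T hT
    rw [mem_coe, mem_powersetCard] at hT
    have haT : a ∉ T := fun h => by simpa using (mem_erase.mp (hT.1 h)).2
    have hbT : b ∉ T := fun h => (mem_erase.mp (hT.1 h)).1 rfl
    show ((insert a (insert b T)).erase a).erase b = T
    rw [erase_insert (by simp [hab, haT]), erase_insert hbT]

set_option maxHeartbeats 1000000 in
theorem stmt_16 {V : Type*} [Fintype V] [DecidableEq V] (N k d t₂ : ℕ)
    (hN : Fintype.card V = N) (hk : k ≤ N) (hN0 : 0 < N)
    (E : Finset (Finset V)) (hd : ∀ y ∈ E, y.card ≤ d)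
    (hdeg : ∑ y ∈ E, y.card ≤ N * t₂)
    (ε : ℝ) (hε : 0 < ε) (hNbig : (N : ℝ) ≥ 4 * k * d / ε) :
    ∑ y ∈ E, (∑ S ∈ Finset.univ.powersetCard k, max 0 (((S ∩ y).card : ℝ) - 1))
        / (N.choose k : ℝ)
      ≤ ε / 8 * k * t₂ := by
  have hC0 : (0:ℝ) < (N.choose k : ℝ) := by
    exact_mod_cast Nat.choose_pos hk
  -- trivial case k ≤ 1
  rcases Nat.lt_or_ge k 2 with hk2 | hk2
  · have hzero : ∀ y ∈ E, (∑ S ∈ Finset.univ.powersetCard k,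
        max 0 (((S ∩ y).card : ℝ) - 1)) = 0 := by
      intro y _
      apply Finset.sum_eq_zero
      intro S hS
      rw [mem_powersetCard] at hS
      have : (S ∩ y).card ≤ 1 := le_trans (card_le_card (inter_subset_left)) (by omega)
      have : ((S ∩ y).card : ℝ) ≤ 1 := by exact_mod_cast this
      have hle : ((S ∩ y).card : ℝ) - 1 ≤ 0 := by linarith
      exact max_eq_left hle
    rw [Finset.sum_congr rfl (fun y hy => by rw [hzero y hy])]
    simp only [zero_div, Finset.sum_const, smul_zero]
    positivity
  -- main case
  have hN2 : 2 ≤ N := le_trans hk2 hk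
  set C := (N.choose k : ℝ) with hCdef
  set C2 := ((N - 2).choose (k - 2) : ℕ) with hC2def
  -- per-edge counting identity
  have hcount : ∀ y : Finset V, ∑ S ∈ (Finset.univ : Finset V).powersetCard k,
      (S ∩ y).offDiag.card = y.offDiag.card * C2 := by
    intro y
    have hrw : ∀ S : Finset V, (S ∩ y).offDiag
        = y.offDiag.filter (fun p => p.1 ∈ S ∧ p.2 ∈ S) := by
      intro S
      ext p
      simp only [Finset.mem_offDiag, Finset.mem_filter, Finset.mem_inter]
      tauto
    calc ∑ S ∈ (Finset.univ : Finset V).powersetCard k, (S ∩ y).offDiag.card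
        = ∑ S ∈ (Finset.univ : Finset V).powersetCard k,
            ∑ p ∈ y.offDiag, (if p.1 ∈ S ∧ p.2 ∈ S then 1 else 0) := by
          refine Finset.sum_congr rfl fun S _ => ?_
          rw [hrw S, Finset.card_filter]
      _ = ∑ p ∈ y.offDiag, ∑ S ∈ (Finset.univ : Finset V).powersetCard k,
            (if p.1 ∈ S ∧ p.2 ∈ S then 1 else 0) := Finset.sum_comm
      _ = ∑ p ∈ y.offDiag, C2 := by
          refine Finset.sum_congr rfl fun p hp => ?_
          rw [← Finset.card_filter]
          have hne : p.1 ≠ p.2 := (Finset.mem_offDiag.mp hp).2.2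
          rw [fiber_count hk2 hne, hN]
      _ = y.offDiag.card * C2 := by rw [Finset.sum_const, smul_eq_mul]
  -- per-edge real bound on each summand
  have hmax : ∀ S y : Finset V, max 0 (((S ∩ y).card : ℝ) - 1)
      ≤ ((S ∩ y).offDiag.card : ℝ) / 2 := by
    intro S y
    have hod : (S ∩ y).offDiag.card = (S ∩ y).card * (S ∩ y).card - (S ∩ y).card :=
      Finset.offDiag_card _
    have hmm : (S ∩ y).card ≤ (S ∩ y).card * (S ∩ y).card := by nlinarith
    have hodc : ((S ∩ y).offDiag.card : ℝ)
        = ((S ∩ y).card : ℝ) * (S ∩ y).card - (S ∩ y).card := by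
      rw [hod, Nat.cast_sub hmm]; push_cast; ring
    rcases Nat.eq_zero_or_pos (S ∩ y).card with h0 | h1
    · rw [hodc, h0]; norm_num
    · have h1' : (1:ℝ) ≤ ((S ∩ y).card : ℝ) := by exact_mod_cast h1
      rw [hodc, max_eq_right (by linarith)]
      rcases Nat.lt_or_ge (S ∩ y).card 2 with h2 | h2
      · have : (S ∩ y).card = 1 := by omega
        rw [this]; norm_num
      · have h2' : (2:ℝ) ≤ ((S ∩ y).card : ℝ) := by exact_mod_cast h2
        nlinarith
  -- bound the inner sum for each edge
  have hedge : ∀ y ∈ E, (∑ S ∈ (Finset.univ : Finset V).powersetCard k,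
      max 0 (((S ∩ y).card : ℝ) - 1)) ≤ (y.card * d * C2 : ℝ) / 2 := by
    intro y hy
    calc (∑ S ∈ (Finset.univ : Finset V).powersetCard k, max 0 (((S ∩ y).card : ℝ) - 1))
        ≤ ∑ S ∈ (Finset.univ : Finset V).powersetCard k,
            ((S ∩ y).offDiag.card : ℝ) / 2 :=
          Finset.sum_le_sum fun S _ => hmax S y
      _ = ((y.offDiag.card * C2 : ℕ) : ℝ) / 2 := by
          rw [← Finset.sum_div]
          congr 1
          rw [← Nat.cast_sum, hcount y]
      _ ≤ (y.card * d * C2 : ℝ) / 2 := by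
          have h1 : y.offDiag.card ≤ y.card * d := by
            rw [Finset.offDiag_card]
            have := hd y hy
            nlinarith [Nat.sub_le (y.card * y.card) y.card]
          have : (y.offDiag.card * C2 : ℕ) ≤ y.card * d * C2 :=
            Nat.mul_le_mul_right _ h1
          have := (Nat.cast_le (α := ℝ)).mpr this
          push_cast at this ⊢
          linarith
  -- the choose ratio bound
  have hidnat : N.choose k * (k * (k - 1)) = C2 * (N * (N - 1)) := by
    obtain ⟨k', rfl⟩ : ∃ k', k = k' + 2 := ⟨k - 2, by omega⟩
    obtain ⟨n', rfl⟩ : ∃ n', N = n' + 2 := ⟨N - 2, by omega⟩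
    simp only [hC2def, Nat.add_sub_cancel]
    have h1 : (n' + 2) * (n' + 1).choose (k' + 1)
        = (n' + 2).choose (k' + 2) * (k' + 2) := Nat.add_one_mul_choose_eq (n' + 1) (k' + 1)
    have h2 : (n' + 1) * n'.choose k'
        = (n' + 1).choose (k' + 1) * (k' + 1) := Nat.add_one_mul_choose_eq n' k'
    have e1 : k' + 2 - 1 = k' + 1 := by omega
    have e2 : n' + 2 - 1 = n' + 1 := by omega
    rw [e1, e2]
    calc (n' + 2).choose (k' + 2) * ((k' + 2) * (k' + 1))
        = ((n' + 2).choose (k' + 2) * (k' + 2)) * (k' + 1) := by ring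
      _ = ((n' + 2) * (n' + 1).choose (k' + 1)) * (k' + 1) := by rw [← h1]
      _ = (n' + 1) * n'.choose k' * (n' + 2) := by rw [mul_assoc, ← h2]; ring
      _ = n'.choose k' * ((n' + 2) * (n' + 1)) := by ring
  have hratio : (C2 : ℝ) * ((N:ℝ) * N) ≤ C * ((k:ℝ) * k) := by
    have hid : C * ((k:ℝ) * ((k:ℝ) - 1)) = (C2:ℝ) * ((N:ℝ) * ((N:ℝ) - 1)) := by
      have h := congrArg (fun n : ℕ => (n : ℝ)) hidnat
      push_cast [Nat.cast_sub (show 1 ≤ k by omega), Nat.cast_sub (show 1 ≤ N by omega)] at h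
      linarith
    -- C2 * N ≤ C * k
    have hkN : (k:ℝ) ≤ N := by exact_mod_cast hk
    have hk1 : (2:ℝ) ≤ k := by exact_mod_cast hk2
    have hN1 : (0:ℝ) < (N:ℝ) - 1 := by
      have : (2:ℝ) ≤ N := by exact_mod_cast hN2
      linarith
    have hC2N : (C2:ℝ) * N ≤ C * k := by
      rw [← mul_le_mul_iff_of_pos_right hN1]
      nlinarith [hid, mul_le_mul_of_nonneg_left (show (k:ℝ) - 1 ≤ (N:ℝ) - 1 by linarith)
        (show (0:ℝ) ≤ C * k by positivity)]
    nlinarith [hC2N, hid, hC0, hkN]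
  -- put it together
  have hsum : ∑ y ∈ E, (∑ S ∈ Finset.univ.powersetCard k,
      max 0 (((S ∩ y).card : ℝ) - 1)) / C
      ≤ ((∑ y ∈ E, (y.card : ℝ)) * d * C2) / (2 * C) := by
    rw [Finset.sum_mul, Finset.sum_mul, Finset.sum_div]
    refine Finset.sum_le_sum fun y hy => ?_
    rw [div_le_div_iff₀ hC0 (by positivity)]
    have h := mul_le_mul_of_nonneg_right (hedge y hy)
      (le_of_lt (by positivity : (0:ℝ) < 2 * C))
    nlinarith [h]
  refine le_trans hsum ?_
  have hdegR : (∑ y ∈ E, ((y.card) : ℝ)) ≤ (N:ℝ) * t₂ := by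
    rw [← Nat.cast_sum]
    exact_mod_cast hdeg
  have hNpos : (0:ℝ) < N := by exact_mod_cast hN0
  have hdk : (d:ℝ) * k ≤ ε * N / 4 := by
    rw [ge_iff_le, div_le_iff₀ hε] at hNbig
    linarith
  have inner : (N:ℝ) * d * C2 ≤ ε / 4 * k * C := by
    rw [← mul_le_mul_iff_of_pos_right hNpos]
    calc ((N:ℝ) * d * C2) * N = (d:ℝ) * ((C2:ℝ) * ((N:ℝ) * N)) := by ring
      _ ≤ (d:ℝ) * (C * ((k:ℝ) * k)) :=
          mul_le_mul_of_nonneg_left hratio (by positivity)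
      _ = ((d:ℝ) * k) * (C * k) := by ring
      _ ≤ (ε * N / 4) * (C * k) :=
          mul_le_mul_of_nonneg_right hdk (by positivity)
      _ = (ε / 4 * k * C) * N := by ring
  calc ((∑ y ∈ E, ((y.card) : ℝ)) * d * C2) / (2 * C)
      ≤ ((t₂:ℝ) * ((N:ℝ) * d * C2)) / (2 * C) := by
        apply (div_le_div_iff_of_pos_right (by positivity)).mpr
        nlinarith [mul_le_mul_of_nonneg_right hdegR
          (show (0:ℝ) ≤ (d:ℝ) * C2 by positivity)]
    _ ≤ ((t₂:ℝ) * (ε / 4 * k * C)) / (2 * C) := by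
        apply (div_le_div_iff_of_pos_right (by positivity)).mpr
        exact mul_le_mul_of_nonneg_left inner (by positivity)
    _ = ε / 8 * k * t₂ := by
        rw [div_eq_iff (by positivity : (2:ℝ) * C ≠ 0)]
        ring
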